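/- Let A be a unital associative ℂ-algebra with invertible element a and elements b_i, b_j satisfying a*b_i = p_i•(b_i*a), a*b_j = p_j•(b_j*a), and b_i*b_j = ε•(p_j^{z_i}*p_i^{-z_j})•(b_j*b_i), where ε = ±1, p_i, p_j ∈ ℂˣ and z_i, z_j ∈ ℤ. Define x_i := a⁻¹*b_i and x_j := a⁻¹*b_j. Then x_i*x_j = ε•(p_i^{1-z_j}*p_j^{z_i-1})•(x_j*x_i). -/
import Mathlib


theorem stmt_4 (A : Type*) [Ring A] [Algebra ℂ A] (a ainv bi bj : A)
    (pi pj : ℂ) (hpi : pi ≠ 0) (hpj : pj ≠ 0) (zi zj : ℤ)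
    (ε : ℂ) (hε : ε = 1 ∨ ε = -1)
    (ha : a * ainv = 1) (ha' : ainv * a = 1)
    (hbi : a * bi = pi • (bi * a)) (hbj : a * bj = pj • (bj * a))
    (hbij : bi * bj = (ε * pj ^ zi * pi ^ (-zj)) • (bj * bi)) :
    (ainv * bi) * (ainv * bj)
      = (ε * pi ^ ((1 : ℤ) - zj) * pj ^ (zi - 1)) • ((ainv * bj) * (ainv * bi)) := by
  have h1 : bi * ainv = pi • (ainv * bi) := by
    calc bi * ainv = ainv * (a * bi) * ainv := by
          rw [← mul_assoc, ha', one_mul]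
      _ = pi • (ainv * bi * (a * ainv)) := by
          rw [hbi]; simp [smul_mul_assoc, mul_smul_comm, mul_assoc]
      _ = pi • (ainv * bi) := by rw [ha, mul_one]
  have h2 : ainv * bj = pj⁻¹ • (bj * ainv) := by
    have h2' : bj * ainv = pj • (ainv * bj) := by
      calc bj * ainv = ainv * (a * bj) * ainv := by
            rw [← mul_assoc, ha', one_mul]
        _ = pj • (ainv * bj * (a * ainv)) := by
            rw [hbj]; simp [smul_mul_assoc, mul_smul_comm, mul_assoc]
        _ = pj • (ainv * bj) := by rw [ha, mul_one]
    rw [h2', smul_smul, inv_mul_cancel₀ hpj, one_smul]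
  have h3 : ainv * ((ainv * bj) * bi) = pj⁻¹ • ((ainv * bj) * (ainv * bi)) := by
    conv_lhs => rw [h2]
    simp [smul_mul_assoc, mul_smul_comm, mul_assoc]
  have key : (ainv * bi) * (ainv * bj)
      = (pi * (ε * pj ^ zi * pi ^ (-zj)) * pj⁻¹) • ((ainv * bj) * (ainv * bi)) := by
    calc (ainv * bi) * (ainv * bj) = ainv * (bi * ainv) * bj := by
          rw [mul_assoc, mul_assoc, mul_assoc]
      _ = pi • (ainv * (ainv * (bi * bj))) := by
          rw [h1]; simp [mul_smul_comm, smul_mul_assoc, mul_assoc]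
      _ = (pi * (ε * pj ^ zi * pi ^ (-zj))) • (ainv * ((ainv * bj) * bi)) := by
          rw [hbij]; simp [mul_smul_comm, smul_mul_assoc, mul_assoc, smul_smul]
      _ = (pi * (ε * pj ^ zi * pi ^ (-zj)) * pj⁻¹) • ((ainv * bj) * (ainv * bi)) := by
          rw [h3, smul_smul]
  rw [key]
  congr 1
  simp only [sub_eq_add_neg, zpow_add₀ hpi, zpow_add₀ hpj, zpow_neg, zpow_one]
  ring
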